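/- Let G be a reductive algebraic group with Lie algebra g, P = L ⋉ U a parabolic with opposite unipotent radical U₋, l = Lie(L), u = Lie(U). For d_i = (ū_i, u_i, z_i, n_i) ∈ U₋ × U × Z_r(l) × l_nil (i = 1,2) with π(d_i) = Ad(ū_i u_i)(z_i + n_i) equal, the element s = u₁⁻¹ū₁⁻¹ū₂u₂ normalizes L, because Ad(s)·z₂ = z₁ with z₁, z₂ ∈ Z_r(l). -/

import Mathlib

open LieAlgebra

/-- If `n` is nilpotent and commutes with `f`, the generalized kernel of `f + n`
contains that of `f`. -/
private lemma aux_nilp {R V : Type*} [CommRing R] [AddCommGroup V] [Module R V]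
    (f n : Module.End R V) (hc : Commute f n) (hn : IsNilpotent n) (v : V)
    (h : ∃ m, (f ^ m) v = 0) : ∃ m, ((f + n) ^ m) v = 0 := by
  obtain ⟨a, ha⟩ := h
  obtain ⟨b, hb⟩ := hn
  refine ⟨a + b, ?_⟩
  rw [hc.add_pow, LinearMap.sum_apply]
  refine Finset.sum_eq_zero fun i hi => ?_
  rcases le_or_gt i a with hia | hia
  · have h1 : n ^ (a + b - i) = 0 := by
      have : a + b - i = (a + b - i - b) + b := by omega
      rw [this, pow_add, hb, mul_zero]
    simp [h1]
  · have h2 : (f ^ i) * (n ^ (a + b - i)) = (n ^ (a + b - i)) * (f ^ i) :=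
      (hc.pow_pow i (a + b - i)).eq
    have h4 : (f ^ i) v = 0 := by
      have h3 : i = (i - a) + a := by omega
      rw [h3, pow_add, Module.End.mul_apply, ha, map_zero]
    rw [h2]
    simp only [Module.End.mul_apply, Module.End.natCast_apply]
    rw [map_nsmul, h4, smul_zero, map_zero]

/-- If `A` is a semisimple endomorphism of a finite-dimensional space, `B` commutes
with `A` and has the same kernel, then the generalized kernel of `B` equals its
kernel. -/
private lemma aux_ss {k V : Type*} [Field k] [AddCommGroup V] [Module k V] [Module.Finite k V]
    (A B : Module.End k V) (hc : Commute A B) (hA : A.IsSemisimple)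
    (hker : LinearMap.ker A = LinearMap.ker B) :
    ∀ m (v : V), (B ^ m) v = 0 → B v = 0 := by
  -- the kernel of `A ^ 2` equals the kernel of `A`
  have hA2 : ∀ v : V, A (A v) = 0 → A v = 0 := by
    intro v hv
    have hp' : ∀ x ∈ LinearMap.ker (A ^ 2), A x ∈ LinearMap.ker (A ^ 2) := by
      intro x hx
      simp only [LinearMap.mem_ker] at hx ⊢
      have : (A ^ 2) (A x) = A ((A ^ 2) x) := by
        simp [pow_succ, Module.End.mul_apply]
      rw [this, hx, map_zero]
    have hp : LinearMap.ker (A ^ 2) ∈ A.invtSubmodule :=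
      (Module.End.mem_invtSubmodule A).mpr hp'
    have hnil : IsNilpotent (A.restrict hp') := by
      refine ⟨2, ?_⟩
      ext ⟨x, hx⟩
      simp only [Module.End.pow_restrict, LinearMap.restrict_apply, LinearMap.zero_apply,
        ZeroMemClass.coe_zero]
      exact hx
    have hzero := Module.End.eq_zero_of_isNilpotent_isSemisimple hnil (hA.restrict hp)
    have hv2 : v ∈ LinearMap.ker (A ^ 2) := by
      simp only [LinearMap.mem_ker, pow_two, Module.End.mul_apply]; exact hv
    have := LinearMap.congr_fun hzero ⟨v, hv2⟩
    simpa [LinearMap.restrict_apply, Subtype.ext_iff] using this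
  -- `ker A ⊔ range A = ⊤`
  have hsum : LinearMap.ker A ⊔ LinearMap.range A = ⊤ := by
    have hdisj : LinearMap.ker A ⊓ LinearMap.range A = ⊥ := by
      rw [Submodule.eq_bot_iff]
      rintro x ⟨hk, u, rfl⟩
      exact hA2 u hk
    have h1 := Submodule.finrank_sup_add_finrank_inf_eq (LinearMap.ker A) (LinearMap.range A)
    rw [hdisj, finrank_bot, add_zero] at h1
    have h2 := LinearMap.finrank_range_add_finrank_ker A
    apply Submodule.eq_top_of_finrank_eq
    omega
  -- the key step : `ker (B ^ 2) = ker B`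
  have key : ∀ v : V, B (B v) = 0 → B v = 0 := by
    intro v hv
    obtain ⟨x, hx, y, hy, hxy⟩ : ∃ x ∈ LinearMap.ker A, ∃ y ∈ LinearMap.range A, x + y = v := by
      have : v ∈ LinearMap.ker A ⊔ LinearMap.range A := hsum ▸ Submodule.mem_top
      exact Submodule.mem_sup.mp this
    obtain ⟨u, rfl⟩ := hy
    have hxB : B x = 0 := by
      have : x ∈ LinearMap.ker B := hker ▸ hx
      simpa using this
    have hBv : B v = A (B u) := by
      rw [← hxy, map_add, hxB, zero_add]
      have : B * A = A * B := hc.symm.eq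
      calc B (A u) = (B * A) u := rfl
        _ = (A * B) u := by rw [this]
        _ = A (B u) := rfl
    have hABu : A (B v) = 0 := by
      have : B v ∈ LinearMap.ker B := by simpa using hv
      have : B v ∈ LinearMap.ker A := hker ▸ this
      simpa using this
    rw [hBv] at hABu ⊢
    exact hA2 (B u) hABu
  -- conclude by induction
  intro m
  induction m with
  | zero => intro v hv; simp only [pow_zero, Module.End.one_apply] at hv; rw [hv, map_zero]
  | succ m ih =>
    intro v hv
    have : (B ^ m) (B v) = 0 := by
      rw [← Module.End.mul_apply, ← pow_succ]
      exact hv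
    exact key v (ih (B v) this)

attribute [local instance 100] LieRing.ofAssociativeRing

/-- For `dᵢ = (ūᵢ, uᵢ, zᵢ, nᵢ) ∈ U₋ × U × Z_r(l) × l_nil` (`i = 1, 2`)
with `π(d₁) = π(d₂)`, i.e. `Ad(ū₁u₁)(z₁ + n₁) = Ad(ū₂u₂)(z₂ + n₂)`, the element
`s = u₁⁻¹ ū₁⁻¹ ū₂ u₂` normalizes `L` (since `Ad(s)·z₂ = z₁` with `z₁, z₂ ∈ Z_r(l)`,
and any `γ` with `Ad(γ)·l = l` normalizes the connected group `L` with Lie algebra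
`l`). -/
theorem stmt_10 (k : Type*) [Field k] [IsAlgClosed k] [CharZero k]
    (g : Type*) [LieRing g] [LieAlgebra k g] [Module.Finite k g]
    (hred : LieAlgebra.radical k g = LieAlgebra.center k g)
    -- the reductive group `G` acting on `g` by Lie algebra automorphisms
    (G : Type*) [Group G] (Ad : G →* (g ≃ₗ[k] g))
    (hAd : ∀ γ : G, ∀ a c : g, Ad γ ⁅a, c⁆ = ⁅Ad γ a, Ad γ c⁆)
    -- the Levi subgroup `L` (connected, with Lie algebra `l`), and the unipotent
    -- radicals `U`, `U₋` of the parabolic and its opposite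
    (L U Uneg : Subgroup G) (l : LieSubalgebra k g)
    (hLevi : ∃ t : g, (ad k g t).IsSemisimple ∧ (l : Set g) = {y : g | ⁅t, y⁆ = 0})
    -- `L` is connected with Lie algebra `l`: anything preserving `l` normalizes `L`
    (hNorm : ∀ γ : G, (∀ y : g, y ∈ l ↔ Ad γ y ∈ l) → γ ∈ Subgroup.normalizer (L : Set G))
    -- the data `d₁`, `d₂`
    (ub₁ ub₂ u₁ u₂ : G)
    (hub₁ : ub₁ ∈ Uneg) (hub₂ : ub₂ ∈ Uneg) (hu₁ : u₁ ∈ U) (hu₂ : u₂ ∈ U)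
    (z₁ z₂ n₁ n₂ : g)
    (hz₁l : z₁ ∈ l) (hz₁c : ∀ w ∈ l, ⁅z₁, w⁆ = 0)
    (hz₁r : {y : g | ⁅z₁, y⁆ = 0} = (l : Set g))
    (hz₂l : z₂ ∈ l) (hz₂c : ∀ w ∈ l, ⁅z₂, w⁆ = 0)
    (hz₂r : {y : g | ⁅z₂, y⁆ = 0} = (l : Set g))
    (hn₁ : n₁ ∈ l) (hn₁nil : IsNilpotent (ad k g n₁))
    (hn₂ : n₂ ∈ l) (hn₂nil : IsNilpotent (ad k g n₂))
    -- `π(d₁) = π(d₂)`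
    (heq : Ad (ub₁ * u₁) (z₁ + n₁) = Ad (ub₂ * u₂) (z₂ + n₂)) :
    u₁⁻¹ * ub₁⁻¹ * ub₂ * u₂ ∈ Subgroup.normalizer (L : Set G) := by
  obtain ⟨t, htss, htl⟩ := hLevi
  set σ : G := u₁⁻¹ * ub₁⁻¹ * ub₂ * u₂ with hσdef
  -- `t ∈ l`
  have htmem : t ∈ l := by
    rw [← SetLike.mem_coe, htl]; simp
  -- commuting elements have commuting adjoints
  have hcomm : ∀ a b : g, ⁅a, b⁆ = 0 → Commute (ad k g a) (ad k g b) := by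
    intro a b h0
    have h1 := (ad k g : g →ₗ⁅k⁆ Module.End k g).map_lie a b
    rw [h0] at h1
    simp only [map_zero] at h1
    rw [Ring.lie_def] at h1
    rw [Commute, SemiconjBy]
    exact sub_eq_zero.mp h1.symm
  -- the generalized kernel of `ad (z + n)` is exactly `l`
  have hgen : ∀ z n : g, (∀ w ∈ l, ⁅z, w⁆ = 0) → ({y : g | ⁅z, y⁆ = 0} = (l : Set g)) →
      n ∈ l → IsNilpotent (ad k g n) →
      ∀ y : g, (∃ m, ((ad k g (z + n)) ^ m) y = 0) ↔ y ∈ l := by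
    intro z n hzc hzr hnl hnnil y
    have hmem : ∀ v : g, ⁅z, v⁆ = 0 ↔ v ∈ l := by
      intro v
      rw [← SetLike.mem_coe, ← hzr]
      exact Iff.rfl
    have hmemt : ∀ v : g, ⁅t, v⁆ = 0 ↔ v ∈ l := by
      intro v
      rw [← SetLike.mem_coe, htl]
      exact Iff.rfl
    have htz : ⁅t, z⁆ = 0 := by
      have := hzc t htmem
      rw [← lie_skew, this, neg_zero]
    have hzn : ⁅z, n⁆ = 0 := hzc n hnl
    have hkert : LinearMap.ker (ad k g t) = LinearMap.ker (ad k g z) := by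
      ext v
      simp only [LinearMap.mem_ker, ad_apply]
      rw [hmemt v, hmem v]
    have hss := aux_ss (ad k g t) (ad k g z) (hcomm t z htz) htss hkert
    have hadd : ad k g (z + n) = ad k g z + ad k g n := by
      ext v; simp [ad_apply, add_lie]
    have hneg : ad k g (-n) = - ad k g n := by
      ext v; simp [ad_apply, neg_lie]
    constructor
    · rintro ⟨m, hm⟩
      -- pass from `ad (z + n)` to `ad z` by subtracting the commuting nilpotent `ad n`
      have hcom2 : Commute (ad k g (z + n)) (ad k g (-n)) := by
        apply hcomm
        simp [add_lie, lie_neg, hzn]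
      have hnil2 : IsNilpotent (ad k g (-n)) := by
        rw [hneg]
        exact hnnil.neg
      obtain ⟨m', hm'⟩ := aux_nilp (ad k g (z + n)) (ad k g (-n)) hcom2 hnil2 y ⟨m, hm⟩
      have hzeq : ad k g (z + n) + ad k g (-n) = ad k g z := by
        rw [hneg, hadd]; abel
      rw [hzeq] at hm'
      have := hss m' y hm'
      rw [ad_apply] at this
      exact (hmem y).mp this
    · intro hy
      have h1 : (ad k g z ^ 1) y = 0 := by
        rw [pow_one, ad_apply]
        exact hzc y hy
      obtain ⟨m, hm⟩ := aux_nilp (ad k g z) (ad k g n) (hcomm z n hzn) hnnil y ⟨1, h1⟩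
      exact ⟨m, by rw [hadd]; exact hm⟩
  -- `Ad σ` maps `z₂ + n₂` to `z₁ + n₁`
  have hσ : σ = (ub₁ * u₁)⁻¹ * (ub₂ * u₂) := by
    rw [hσdef]; group
  have hAdx : Ad σ (z₂ + n₂) = z₁ + n₁ := by
    rw [hσ, map_mul, map_inv]
    show (Ad (ub₁ * u₁))⁻¹ (Ad (ub₂ * u₂) (z₂ + n₂)) = z₁ + n₁
    rw [← heq]
    exact (Ad (ub₁ * u₁)).symm_apply_apply _
  -- intertwining of the adjoint actions
  have hint : ∀ (m : ℕ) (y : g),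
      ((ad k g (z₁ + n₁)) ^ m) (Ad σ y) = Ad σ (((ad k g (z₂ + n₂)) ^ m) y) := by
    intro m
    induction m with
    | zero => intro y; simp
    | succ m ih =>
      intro y
      rw [pow_succ', pow_succ', Module.End.mul_apply, Module.End.mul_apply, ih y,
        ad_apply, ad_apply, ← hAdx, ← hAd σ]
  -- conclude
  refine hNorm σ fun y => ?_
  rw [← hgen z₂ n₂ hz₂c hz₂r hn₂ hn₂nil y, ← hgen z₁ n₁ hz₁c hz₁r hn₁ hn₁nil (Ad σ y)]
  constructor
  · rintro ⟨m, hm⟩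
    exact ⟨m, by rw [hint m y, hm, map_zero]⟩
  · rintro ⟨m, hm⟩
    refine ⟨m, ?_⟩
    rw [hint m y] at hm
    exact (LinearEquiv.map_eq_zero_iff (Ad σ)).mp hm
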